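/- Consider the two-locus, two-allele recombination ODE on ℝ⁴: ṗ₁ = ṗ₄ = k(p₂p₃ − p₁p₄) and ṗ₂ = ṗ₃ = k(p₁p₄ − p₂p₃), with rate constant k > 0. Along any differentiable solution p : [0,∞) → ℝ⁴_{≥0}, the linkage disequilibrium D(t) := p₁(t)p₄(t) − p₂(t)p₃(t) satisfies Ḋ = −k·D·(p₁+p₂+p₃+p₄); consequently, with s := p₁(0)+p₂(0)+p₃(0)+p₄(0) (which is conserved), D(t) = D(0)·e^{−kst} for all t ≥ 0, and in particular D(t) → 0 as t → ∞ whenever s > 0. -/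

import Mathlib

open Filter

lemma const_of_deriv_zero_on_nonneg (f : ℝ → ℝ)
    (hf : ∀ t, 0 ≤ t → HasDerivAt f 0 t) :
    ∀ t, 0 ≤ t → f t = f 0 := by
  intro t ht
  have hc : ContinuousOn f (Set.Icc 0 t) := fun x hx =>
    ((hf x hx.1).continuousAt).continuousWithinAt
  exact constant_of_has_deriv_right_zero hc
    (fun x hx => ((hf x hx.1).hasDerivWithinAt)) t ⟨ht, le_rfl⟩

theorem linkage_disequilibrium_decay
    (k : ℝ) (hk : 0 < k) (p₁ p₂ p₃ p₄ : ℝ → ℝ)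
    (hnn : ∀ t, 0 ≤ t → 0 ≤ p₁ t ∧ 0 ≤ p₂ t ∧ 0 ≤ p₃ t ∧ 0 ≤ p₄ t)
    (h₁ : ∀ t, 0 ≤ t → HasDerivAt p₁ (k * (p₂ t * p₃ t - p₁ t * p₄ t)) t)
    (h₄ : ∀ t, 0 ≤ t → HasDerivAt p₄ (k * (p₂ t * p₃ t - p₁ t * p₄ t)) t)
    (h₂ : ∀ t, 0 ≤ t → HasDerivAt p₂ (k * (p₁ t * p₄ t - p₂ t * p₃ t)) t)
    (h₃ : ∀ t, 0 ≤ t → HasDerivAt p₃ (k * (p₁ t * p₄ t - p₂ t * p₃ t)) t)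
    (D : ℝ → ℝ) (hD : D = fun t => p₁ t * p₄ t - p₂ t * p₃ t)
    (s : ℝ) (hs : s = p₁ 0 + p₂ 0 + p₃ 0 + p₄ 0) :
    (∀ t, 0 ≤ t → p₁ t + p₂ t + p₃ t + p₄ t = s) ∧
    (∀ t, 0 ≤ t → HasDerivAt D (-k * D t * (p₁ t + p₂ t + p₃ t + p₄ t)) t) ∧
    (∀ t, 0 ≤ t → D t = D 0 * Real.exp (-(k * s * t))) ∧
    (0 < s → Tendsto D atTop (nhds 0)) := by
  -- sum conservation
  have hsum : ∀ t, 0 ≤ t → p₁ t + p₂ t + p₃ t + p₄ t = s := by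
    have := const_of_deriv_zero_on_nonneg (fun t => p₁ t + p₂ t + p₃ t + p₄ t)
      (fun t ht => by
        have := (((h₁ t ht).add (h₂ t ht)).add (h₃ t ht)).add (h₄ t ht)
        refine this.congr_deriv ?_
        ring)
    intro t ht
    have := this t ht
    rw [this, hs]
  -- derivative of D
  have hDd : ∀ t, 0 ≤ t → HasDerivAt D (-k * D t * (p₁ t + p₂ t + p₃ t + p₄ t)) t := by
    intro t ht
    have := ((h₁ t ht).mul (h₄ t ht)).sub ((h₂ t ht).mul (h₃ t ht))
    rw [hD]
    refine this.congr_deriv ?_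
    beta_reduce
    ring
  -- explicit formula
  have hform : ∀ t, 0 ≤ t → D t = D 0 * Real.exp (-(k * s * t)) := by
    have key := const_of_deriv_zero_on_nonneg (fun t => D t * Real.exp (k * s * t))
      (fun t ht => by
        have he : HasDerivAt (fun t => Real.exp (k * s * t)) (k * s * Real.exp (k * s * t)) t := by
          have := ((hasDerivAt_id t).const_mul (k * s)).exp
          simpa [mul_comm] using this
        have := (hDd t ht).mul he
        refine this.congr_deriv ?_
        rw [hsum t ht]
        ring)
    intro t ht
    have h0 : D t * Real.exp (k * s * t) = D 0 * Real.exp (k * s * 0) := key t ht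
    have hne : Real.exp (k * s * t) ≠ 0 := (Real.exp_pos _).ne'
    field_simp at h0
    rw [Real.exp_neg]
    field_simp
    simpa using h0
  refine ⟨hsum, hDd, hform, ?_⟩
  intro hspos
  have hlim : Tendsto (fun t => D 0 * Real.exp (-(k * s * t))) atTop (nhds 0) := by
    have h1 : Tendsto (fun t : ℝ => -(k * s * t)) atTop atBot := by
      have := (tendsto_id (α := ℝ)).const_mul_atTop (mul_pos hk hspos)
      exact tendsto_neg_atBot_iff.mpr (by simpa using this)
    have := (Real.tendsto_exp_atBot).comp h1
    simpa using this.const_mul (D 0)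
  refine hlim.congr' ?_
  filter_upwards [eventually_ge_atTop (0:ℝ)] with t ht
  exact (hform t ht).symm
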